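/- For every real number T, the integral ∫₀^∞ |e^{-irT} − 1|² e^{-2r} r^{-1} dr converges and equals log(1 + T²/4). -/

import Mathlib

open MeasureTheory Set

private lemma cocycle_abs_sq (x : ℝ) :
    ‖Complex.exp (-(Complex.I * x)) - 1‖ ^ 2 = 2 - 2 * Real.cos x := by
  have h : -(Complex.I * x) = ((-x : ℝ) : ℂ) * Complex.I := by push_cast; ring
  rw [h, Complex.sq_norm, Complex.normSq_apply]
  simp only [Complex.sub_re, Complex.sub_im, Complex.one_re, Complex.one_im,
    Complex.exp_ofReal_mul_I_re, Complex.exp_ofReal_mul_I_im, Real.cos_neg, Real.sin_neg]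
  nlinarith [Real.sin_sq_add_cos_sq x]

private lemma exp_two_tendsto : Filter.Tendsto (fun r : ℝ => Real.exp (-(2 * r)))
    Filter.atTop (nhds 0) := by
  have h := Real.tendsto_exp_atBot.comp
    ((Filter.tendsto_id (α := ℝ)).const_mul_atTop_of_neg (by norm_num : (-2:ℝ) < 0))
  simpa [Function.comp_def, neg_mul] using h

private lemma exp_two_integrable : IntegrableOn (fun r : ℝ => Real.exp (-(2 * r))) (Ioi 0) := by
  simpa [neg_mul] using exp_neg_integrableOn_Ioi 0 (by norm_num : (0:ℝ) < 2)

private lemma mul_exp_integrable : IntegrableOn (fun r : ℝ => r * Real.exp (-(2 * r))) (Ioi 0) := by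
  apply integrable_of_isBigO_exp_neg (b := 1) one_pos
  · exact (continuous_id.mul (by continuity)).continuousOn
  · rw [Asymptotics.isBigO_iff]
    refine ⟨1, Filter.eventually_atTop.2 ⟨0, fun r hr => ?_⟩⟩
    have h1 : r ≤ Real.exp r := (Real.add_one_le_exp r).trans' (by linarith)
    rw [Real.norm_eq_abs, Real.norm_eq_abs, abs_of_nonneg (by positivity),
      abs_of_nonneg (Real.exp_pos _).le, one_mul]
    calc r * Real.exp (-(2 * r)) ≤ Real.exp r * Real.exp (-(2 * r)) := by
          exact mul_le_mul_of_nonneg_right h1 (Real.exp_pos _).le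
      _ = Real.exp (-1 * r) := by rw [← Real.exp_add]; ring_nf

private noncomputable def fInt (T : ℝ) : ℝ → ℝ :=
  fun r => (2 - 2 * Real.cos (r * T)) * Real.exp (-(2 * r)) / r

private lemma fInt_meas (T : ℝ) : AEStronglyMeasurable (fInt T) (volume.restrict (Ioi 0)) := by
  apply Measurable.aestronglyMeasurable
  unfold fInt
  fun_prop

private lemma fInt_integrable (T : ℝ) : IntegrableOn (fInt T) (Ioi 0) := by
  refine Integrable.mono (mul_exp_integrable.const_mul (T ^ 2)) (fInt_meas T) ?_
  rw [ae_restrict_iff' measurableSet_Ioi]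
  filter_upwards with r hr
  have hr0 : (0:ℝ) < r := hr
  have h1 : Real.cos (r * T) ≤ 1 := Real.cos_le_one _
  have h2 : 1 - (r * T) ^ 2 / 2 ≤ Real.cos (r * T) := Real.one_sub_sq_div_two_le_cos
  have hnum : 0 ≤ 2 - 2 * Real.cos (r * T) := by linarith
  have hnum2 : 2 - 2 * Real.cos (r * T) ≤ (r * T) ^ 2 := by linarith
  rw [Real.norm_eq_abs, Real.norm_eq_abs, fInt, abs_of_nonneg (by positivity),
    abs_of_nonneg (by positivity)]
  rw [div_le_iff₀ hr0]
  calc (2 - 2 * Real.cos (r * T)) * Real.exp (-(2 * r)) ≤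
        (r * T) ^ 2 * Real.exp (-(2 * r)) :=
        mul_le_mul_of_nonneg_right hnum2 (Real.exp_pos _).le
    _ = T ^ 2 * (r * Real.exp (-(2 * r))) * r := by ring

/-- The `sin` integral. -/
private lemma sin_exp_integral (T : ℝ) :
    ∫ r in Ioi (0:ℝ), Real.sin (r * T) * Real.exp (-(2 * r)) = T / (4 + T ^ 2) := by
  have hT4 : (0:ℝ) < 4 + T ^ 2 := by positivity
  set g : ℝ → ℝ := fun r =>
    -(Real.exp (-(2 * r)) * (2 * Real.sin (r * T) + T * Real.cos (r * T))) / (4 + T ^ 2) with hg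
  have hderiv : ∀ r ∈ Ici (0:ℝ), HasDerivAt g (Real.sin (r * T) * Real.exp (-(2 * r))) r := by
    intro r _
    have h1 : HasDerivAt (fun r : ℝ => r * T) T r := hasDerivAt_mul_const T
    have hsin : HasDerivAt (fun r : ℝ => Real.sin (r * T)) (Real.cos (r * T) * T) r :=
      h1.sin
    have hcos : HasDerivAt (fun r : ℝ => Real.cos (r * T)) (-Real.sin (r * T) * T) r :=
      h1.cos
    have hexp : HasDerivAt (fun r : ℝ => Real.exp (-(2 * r))) (Real.exp (-(2 * r)) * (-2)) r := by
      have : HasDerivAt (fun r : ℝ => -(2 * r)) (-2) r := by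
        simpa using ((hasDerivAt_id r).const_mul (2:ℝ)).fun_neg
      exact (Real.hasDerivAt_exp _).comp r this
    have := ((hexp.fun_mul (((hsin.const_mul 2)).fun_add (hcos.const_mul T))).fun_neg).div_const (4 + T ^ 2)
    refine this.congr_deriv ?_
    field_simp
    ring
  have htend : Filter.Tendsto g Filter.atTop (nhds 0) := by
    rw [hg]
    have hb2 : ∀ r, ‖g r‖ ≤ (2 + |T|) / (4 + T ^ 2) * Real.exp (-(2 * r)) := by
      intro r
      have hb : |2 * Real.sin (r * T) + T * Real.cos (r * T)| ≤ 2 + |T| := by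
        calc |2 * Real.sin (r * T) + T * Real.cos (r * T)|
            ≤ |2 * Real.sin (r * T)| + |T * Real.cos (r * T)| := abs_add_le _ _
          _ ≤ 2 + |T| := by
              rw [abs_mul, abs_mul]
              have := Real.abs_sin_le_one (r * T); have := Real.abs_cos_le_one (r * T)
              have h2 : |(2:ℝ)| = 2 := by norm_num
              nlinarith [abs_nonneg T, abs_nonneg (Real.sin (r*T)), abs_nonneg (Real.cos (r*T))]
      rw [Real.norm_eq_abs, abs_div, abs_neg, abs_mul, abs_of_pos hT4, div_mul_eq_mul_div,
        div_le_div_iff₀ (by positivity) hT4, abs_of_nonneg (Real.exp_pos _).le]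
      have hmul := mul_le_mul_of_nonneg_left hb (Real.exp_pos (-(2*r))).le
      nlinarith [mul_le_mul_of_nonneg_right hmul hT4.le]
    exact squeeze_zero_norm hb2
      (by simpa using exp_two_tendsto.const_mul ((2 + |T|) / (4 + T ^ 2)))
  have hint : IntegrableOn (fun r => Real.sin (r * T) * Real.exp (-(2 * r))) (Ioi 0) := by
    refine Integrable.mono exp_two_integrable (by apply Measurable.aestronglyMeasurable; fun_prop) ?_
    filter_upwards with r
    simp only [Real.norm_eq_abs, abs_mul, Real.abs_exp]
    nlinarith [Real.abs_sin_le_one (r * T), Real.exp_pos (-(2 * r)),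
      abs_nonneg (Real.sin (r*T))]
  rw [MeasureTheory.integral_Ioi_of_hasDerivAt_of_tendsto' hderiv hint htend]
  simp [hg]
  field_simp

private lemma G_hasDeriv (T : ℝ) :
    HasDerivAt (fun T => ∫ r in Ioi (0:ℝ), fInt T r) (2 * T / (4 + T ^ 2)) T := by
  have key := hasDerivAt_integral_of_dominated_loc_of_deriv_le (μ := volume.restrict (Ioi 0))
      (F := fun T r => fInt T r) (F' := fun T r => 2 * Real.sin (r * T) * Real.exp (-(2 * r)))
      (x₀ := T) (bound := fun r => 2 * Real.exp (-(2 * r))) (Metric.ball_mem_nhds T one_pos)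
      (Filter.Eventually.of_forall fun x => fInt_meas x)
      (fInt_integrable T)
      (by apply Measurable.aestronglyMeasurable; fun_prop)
      ?_ (exp_two_integrable.const_mul 2) ?_
  · have := key.2
    have hval : ∫ r in Ioi (0:ℝ), 2 * Real.sin (r * T) * Real.exp (-(2 * r))
        = 2 * T / (4 + T ^ 2) := by
      rw [show (fun r => 2 * Real.sin (r * T) * Real.exp (-(2 * r)))
          = (fun r => 2 * (Real.sin (r * T) * Real.exp (-(2 * r)))) from by funext r; ring]
      rw [MeasureTheory.integral_const_mul, sin_exp_integral]
      ring
    rwa [hval] at this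
  · filter_upwards with r
    intro x _
    rw [Real.norm_eq_abs, abs_mul, abs_mul, Real.abs_exp]
    have h1 := Real.abs_sin_le_one (r * x)
    have h2 : |(2:ℝ)| = 2 := by norm_num
    rw [h2]
    nlinarith [mul_le_mul_of_nonneg_right h1 (Real.exp_pos (-(2 * r))).le,
      abs_nonneg (Real.sin (r * x))]
  · rw [ae_restrict_iff' measurableSet_Ioi]
    filter_upwards with r hr
    intro x _
    have hr0 : (0:ℝ) < r := hr
    have h1 : HasDerivAt (fun x : ℝ => r * x) r x := by
      simpa using (hasDerivAt_id x).const_mul r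
    have hcos : HasDerivAt (fun x : ℝ => Real.cos (r * x)) (-Real.sin (r * x) * r) x :=
      (Real.hasDerivAt_cos (r * x)).comp x h1
    have h2 := (((hcos.const_mul 2).const_sub 2).mul_const
      (Real.exp (-(2 * r)))).div_const r
    rw [show (fun x => fInt x r)
        = fun x => (2 - 2 * Real.cos (r * x)) * Real.exp (-(2 * r)) / r from by
      funext x; simp [fInt, mul_comm r x]]
    refine h2.congr_deriv ?_
    field_simp

theorem cocycle_norm_radial_integral (T : ℝ) :
    IntegrableOn
      (fun r : ℝ =>
        ‖Complex.exp (-(Complex.I * r * T)) - 1‖ ^ 2 * Real.exp (-(2 * r)) / r)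
      (Ioi 0) volume ∧
    ∫ r in Ioi (0 : ℝ),
        ‖Complex.exp (-(Complex.I * r * T)) - 1‖ ^ 2 * Real.exp (-(2 * r)) / r
      = Real.log (1 + T ^ 2 / 4) := by
  have hfun : (fun r : ℝ =>
      ‖Complex.exp (-(Complex.I * r * T)) - 1‖ ^ 2 * Real.exp (-(2 * r)) / r)
      = fInt T := by
    funext r
    have h := cocycle_abs_sq (r * T)
    rw [fInt]
    rw [show -(Complex.I * r * T) = -(Complex.I * ((r * T : ℝ) : ℂ)) from by push_cast; ring, h]
  rw [hfun]
  refine ⟨fInt_integrable T, ?_⟩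
  -- both sides have the same derivative and agree at 0
  set G : ℝ → ℝ := fun T => ∫ r in Ioi (0:ℝ), fInt T r with hG
  set H : ℝ → ℝ := fun T => Real.log (1 + T ^ 2 / 4) with hH
  have hHpos : ∀ x : ℝ, (0:ℝ) < 1 + x ^ 2 / 4 := fun x => by positivity
  have hHderiv : ∀ x : ℝ, HasDerivAt H (2 * x / (4 + x ^ 2)) x := by
    intro x
    have hin : HasDerivAt (fun x : ℝ => 1 + x ^ 2 / 4) (x / 2) x := by
      have := ((hasDerivAt_pow 2 x).div_const 4).const_add 1
      refine this.congr_deriv ?_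
      norm_num
      ring
    have := hin.log (hHpos x).ne'
    convert this using 1
    field_simp
    ring
  have key : ∀ x : ℝ, G x - H x = G 0 - H 0 := by
    intro x
    have hdiff : Differentiable ℝ (fun x => G x - H x) := fun x =>
      ((G_hasDeriv x).sub (hHderiv x)).differentiableAt
    apply is_const_of_deriv_eq_zero hdiff
    intro y
    have : HasDerivAt (fun x => G x - H x) (2 * y / (4 + y ^ 2) - 2 * y / (4 + y ^ 2)) y :=
      (G_hasDeriv y).sub (hHderiv y)
    simpa using this.deriv
  have hG0 : G 0 = 0 := by
    rw [hG]
    simp [fInt]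
  have hH0 : H 0 = 0 := by simp [hH]
  have := key T
  rw [hG0, hH0] at this
  have : G T = H T := by linarith
  exact this
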